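/- The normalized determinant H̃(x,θ) = H(x,θ)/∫_Θ H(x,θ)dθ, where H(x,θ) = det((1/π)(1-x_i²)/(1-2x_i cos θ_j + x_i²)), converges as x → 0 with -1 < x_n < ... < x_1 < 1 to (1/M) ∏_{i<j} 2(cos θ_i - cos θ_j) = (1/M) ∏_{i<j} |e^{iθ_i} - e^{iθ_j}| · |e^{iθ_i} - e^{-iθ_j}|, pointwise on Θ = {0 < θ_1 < ... < θ_n < π}, with M = ∫_Θ ∏_{i<j} 2(cos θ_i - cos θ_j) dθ. -/

import Mathlib

open Real Finset Filter MeasureTheory Topology Complex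

private lemma det_col_op {m : Type*} [DecidableEq m] [Fintype m] {A B : Matrix m m ℝ}
    (c : m → ℝ) (k : m) (hk : c k = 0) (h : ∀ i j, A i j = B i j + c j * B i k) :
    A.det = B.det := by
  rw [← Matrix.det_transpose A, ← Matrix.det_transpose B]
  exact Matrix.det_eq_of_forall_row_eq_smul_add_const c k hk fun i j => h j i

private lemma det_inv_q : ∀ (n : ℕ) (x c : Fin n → ℝ),
    (∀ i j, 1 - 2 * x i * c j + x i ^ 2 ≠ 0) →
    Matrix.det (Matrix.of fun i j => 1 / (1 - 2 * x i * c j + x i ^ 2)) =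
      (∏ i, ∏ j ∈ Finset.Ioi i, ((x i - x j) * (1 - x i * x j) * (2 * (c i - c j)))) /
        ∏ i, ∏ j, (1 - 2 * x i * c j + x i ^ 2) := by
  intro n
  induction n with
  | zero =>
    intro x c _
    simp [Matrix.det_fin_zero]
  | succ n ih =>
    intro x c hq
    set Q : Fin (n+1) → Fin (n+1) → ℝ := fun i j => 1 - 2 * x i * c j + x i ^ 2 with hQ
    have hq' : ∀ i j, Q i j ≠ 0 := hq
    -- matrices appearing in the row/column reduction
    set B : Matrix (Fin (n+1)) (Fin (n+1)) ℝ := Matrix.of fun i j =>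
      (1 / Q 0 j) * (Fin.cases 1 (fun i' => (x 0 - x i'.succ) *
        ((x 0 + x i'.succ - 2 * c j) / Q i'.succ j)) i) with hB
    set C : Matrix (Fin (n+1)) (Fin (n+1)) ℝ := Matrix.of fun i j =>
      (Fin.cases 1 (fun i' => (x 0 - x i'.succ) *
        ((x 0 + x i'.succ - 2 * c j) / Q i'.succ j)) i : ℝ) with hC
    set D : Matrix (Fin (n+1)) (Fin (n+1)) ℝ := Matrix.of fun i j =>
      (Fin.cases 1 (fun i' => (x 0 + x i'.succ - 2 * c j) / Q i'.succ j) i : ℝ) with hD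
    set E : Matrix (Fin (n+1)) (Fin (n+1)) ℝ := Matrix.of fun i j =>
      (Fin.cases (D i 0)
        (fun j' => (Fin.cases 0 (fun i' => (2 * (c 0 - c j'.succ)) *
          (((1 - x 0 * x i'.succ) / Q i'.succ 0) * (1 / Q i'.succ j'.succ))) i : ℝ)) j : ℝ) with hE
    have step1 : Matrix.det (Matrix.of fun i j => 1 / Q i j) = Matrix.det B := by
      apply Matrix.det_eq_of_forall_row_eq_smul_add_const
        (fun i => (Fin.cases 0 (fun _ => 1) i : ℝ)) 0 (by simp)
      intro i j
      refine Fin.cases ?_ (fun i' => ?_) i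
      · simp [hB]
      · simp only [hB, Matrix.of_apply, Fin.cases_succ, Fin.cases_zero]
        have h1 := hq' i'.succ j
        have h2 := hq' 0 j
        field_simp
        ring
    have step2 : Matrix.det B = (∏ j, 1 / Q 0 j) * Matrix.det C := by
      rw [hB, hC]
      exact Matrix.det_mul_row _ _
    have step3 : Matrix.det C = (∏ i' : Fin n, (x 0 - x i'.succ)) * Matrix.det D := by
      have : C = Matrix.of fun i j =>
          (Fin.cases 1 (fun i' => x 0 - x i'.succ) i : ℝ) * D i j := by
        ext i j
        refine Fin.cases ?_ (fun i' => ?_) i <;> simp [hC, hD, mul_assoc]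
      rw [this, Matrix.det_mul_column]
      congr 1
      rw [Fin.prod_univ_succ]
      simp
    have step4 : Matrix.det D = Matrix.det E := by
      apply det_col_op (fun j => (Fin.cases 0 (fun _ => 1) j : ℝ)) 0 (by simp)
      intro i j
      refine Fin.cases ?_ (fun j' => ?_) j
      · simp [hE]
      · refine Fin.cases ?_ (fun i' => ?_) i
        · simp [hE, hD]
        · simp only [hE, hD, Matrix.of_apply, Fin.cases_succ, Fin.cases_zero]
          have h1 := hq' i'.succ j'.succ
          have h2 := hq' i'.succ 0
          field_simp
          ring
    have step5 : Matrix.det E = Matrix.det (E.submatrix Fin.succ Fin.succ) := by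
      rw [Matrix.det_succ_row_zero, Fin.sum_univ_succ]
      simp [hE, hD, Fin.succAbove_zero]
    have step6 : Matrix.det (E.submatrix Fin.succ Fin.succ) =
        (∏ j' : Fin n, (2 * (c 0 - c j'.succ))) *
          ((∏ i' : Fin n, ((1 - x 0 * x i'.succ) / Q i'.succ 0)) *
            Matrix.det (Matrix.of fun i' j' : Fin n => 1 / Q i'.succ j'.succ)) := by
      have h1 : E.submatrix Fin.succ Fin.succ = Matrix.of fun i' j' : Fin n =>
          (2 * (c 0 - c j'.succ)) * (Matrix.of fun i' j' : Fin n =>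
            ((1 - x 0 * x i'.succ) / Q i'.succ 0) *
              (Matrix.of fun i' j' : Fin n => 1 / Q i'.succ j'.succ) i' j') i' j' := by
        ext i' j'
        simp [hE]
      rw [h1, Matrix.det_mul_row, Matrix.det_mul_column]
    have step7 : (Matrix.of fun i' j' : Fin n => 1 / Q i'.succ j'.succ).det =
        (∏ i' : Fin n, ∏ j' ∈ Finset.Ioi i', ((x i'.succ - x j'.succ) * (1 - x i'.succ * x j'.succ)
          * (2 * (c i'.succ - c j'.succ)))) / ∏ i' : Fin n, ∏ j' : Fin n, Q i'.succ j'.succ := by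
      simpa using ih (fun i' => x i'.succ) (fun j' => c j'.succ) (fun i' j' => hq' i'.succ j'.succ)
    rw [step1, step2, step3, step4, step5, step6, step7]
    -- now pure algebra with products
    have ha : (∏ j, Q 0 j) ≠ 0 := Finset.prod_ne_zero_iff.mpr fun j _ => hq' 0 j
    have hb : (∏ i' : Fin n, Q i'.succ 0) ≠ 0 :=
      Finset.prod_ne_zero_iff.mpr fun i' _ => hq' i'.succ 0
    have hd : (∏ i' : Fin n, ∏ j' : Fin n, Q i'.succ j'.succ) ≠ 0 :=
      Finset.prod_ne_zero_iff.mpr fun i' _ =>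
        Finset.prod_ne_zero_iff.mpr fun j' _ => hq' i'.succ j'.succ
    have e1 : (∏ j, (1:ℝ) / Q 0 j) = 1 / ∏ j, Q 0 j := by
      rw [Finset.prod_div_distrib]
      simp
    have e2 : (∏ i' : Fin n, ((1 - x 0 * x i'.succ) / Q i'.succ 0)) =
        (∏ i' : Fin n, (1 - x 0 * x i'.succ)) / ∏ i' : Fin n, Q i'.succ 0 :=
      Finset.prod_div_distrib _ _
    have e3 : (∏ i : Fin (n+1), ∏ j ∈ Finset.Ioi i,
          ((x i - x j) * (1 - x i * x j) * (2 * (c i - c j)))) =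
        ((∏ i' : Fin n, (x 0 - x i'.succ)) * (∏ i' : Fin n, (1 - x 0 * x i'.succ)) *
          (∏ j' : Fin n, (2 * (c 0 - c j'.succ)))) *
        (∏ i' : Fin n, ∏ j' ∈ Finset.Ioi i',
          ((x i'.succ - x j'.succ) * (1 - x i'.succ * x j'.succ) * (2 * (c i'.succ - c j'.succ)))) := by
      rw [Fin.prod_univ_succ, Fin.prod_Ioi_zero]
      simp_rw [Fin.prod_Ioi_succ]
      rw [Finset.prod_mul_distrib, Finset.prod_mul_distrib]
    have e4 : (∏ i : Fin (n+1), ∏ j, Q i j) =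
        (∏ j, Q 0 j) * ((∏ i' : Fin n, Q i'.succ 0) *
          (∏ i' : Fin n, ∏ j' : Fin n, Q i'.succ j'.succ)) := by
      rw [Fin.prod_univ_succ]
      congr 1
      rw [← Finset.prod_mul_distrib]
      exact Finset.prod_congr rfl fun i' _ => Fin.prod_univ_succ _
    rw [e1, e2, e3, e4]
    field_simp

/-- the function `K` appearing after dividing the determinant by the Vandermonde factor -/
private noncomputable def Kf (n : ℕ) (x t : Fin n → ℝ) : ℝ :=
  ((∏ i, (1 / Real.pi) * (1 - x i ^ 2)) *
    ∏ i, ∏ j ∈ Finset.Ioi i, ((1 - x i * x j) * (2 * (Real.cos (t i) - Real.cos (t j))))) /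
    ∏ i, ∏ j, (1 - 2 * x i * Real.cos (t j) + x i ^ 2)

private noncomputable def Pf (n : ℕ) (t : Fin n → ℝ) : ℝ :=
  ∏ i, ∏ j ∈ Finset.Ioi i, (2 * (Real.cos (t i) - Real.cos (t j)))

private lemma two_xc_le {x c : ℝ} (hc : |c| ≤ 1) : 2 * x * c ≤ 2 * |x| := by
  calc 2 * x * c ≤ 2 * |x * c| := by nlinarith [le_abs_self (x * c)]
  _ = 2 * (|x| * |c|) := by rw [abs_mul]
  _ ≤ 2 * (|x| * 1) := by nlinarith [abs_nonneg x, abs_nonneg c]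
  _ = 2 * |x| := by ring

private lemma q_pos {x c : ℝ} (hx : |x| < 1) (hc : |c| ≤ 1) : 0 < 1 - 2 * x * c + x ^ 2 := by
  have h1 := two_xc_le (x := x) hc
  have h2 : 0 < (1 - |x|) ^ 2 := pow_pos (by linarith) 2
  nlinarith [_root_.sq_abs x]

private lemma q_quarter {x c : ℝ} (hx : |x| ≤ 1 / 2) (hc : |c| ≤ 1) :
    1 / 4 ≤ 1 - 2 * x * c + x ^ 2 := by
  have h1 := two_xc_le (x := x) hc
  have h0 := abs_nonneg x
  nlinarith [_root_.sq_abs x, mul_nonneg (by linarith : (0:ℝ) ≤ 1/2 - |x|) (by linarith : (0:ℝ) ≤ 3/2 - |x|)]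

/-- factorization of the Poisson-kernel determinant -/
private lemma detH_eq (n : ℕ) (x t : Fin n → ℝ)
    (hq : ∀ i j, 1 - 2 * x i * Real.cos (t j) + x i ^ 2 ≠ 0) :
    Matrix.det (Matrix.of fun i j : Fin n =>
        (1 / Real.pi) * (1 - (x i) ^ 2) / (1 - 2 * x i * Real.cos (t j) + (x i) ^ 2)) =
      (∏ i, ∏ j ∈ Finset.Ioi i, (x i - x j)) * Kf n x t := by
  have h1 : (Matrix.of fun i j : Fin n =>
      (1 / Real.pi) * (1 - (x i) ^ 2) / (1 - 2 * x i * Real.cos (t j) + (x i) ^ 2)) =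
      Matrix.of fun i j : Fin n => ((1 / Real.pi) * (1 - (x i) ^ 2)) *
        (Matrix.of fun i j : Fin n => 1 / (1 - 2 * x i * Real.cos (t j) + (x i) ^ 2)) i j := by
    ext i j
    simp [div_eq_mul_inv, mul_assoc, one_div]
  rw [h1, Matrix.det_mul_column, det_inv_q n x (fun j => Real.cos (t j)) hq]
  have h2 : (∏ i, ∏ j ∈ Finset.Ioi i,
      ((x i - x j) * (1 - x i * x j) * (2 * (Real.cos (t i) - Real.cos (t j))))) =
      (∏ i, ∏ j ∈ Finset.Ioi i, (x i - x j)) *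
        ∏ i, ∏ j ∈ Finset.Ioi i, ((1 - x i * x j) * (2 * (Real.cos (t i) - Real.cos (t j)))) := by
    rw [← Finset.prod_mul_distrib]
    refine Finset.prod_congr rfl fun i _ => ?_
    rw [← Finset.prod_mul_distrib]
    exact Finset.prod_congr rfl fun j _ => by ring
  rw [h2, Kf]
  ring

private lemma Kf_zero (n : ℕ) (t : Fin n → ℝ) :
    Kf n (fun _ => 0) t = (1 / Real.pi) ^ n * Pf n t := by
  simp [Kf, Pf, Finset.prod_mul_distrib]



private lemma Kf_bound (n : ℕ) (x t : Fin n → ℝ) (hx : ∀ i, |x i| ≤ 1 / 2) :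
    ‖Kf n x t‖ ≤ (∏ i : Fin n, ∏ _j ∈ Finset.Ioi i, (8 : ℝ)) /
      ∏ _i : Fin n, ∏ _j : Fin n, (1 / 4 : ℝ) := by
  have hc : ∀ j, |Real.cos (t j)| ≤ 1 := fun j => Real.abs_cos_le_one _
  have hden_ge : (∏ _i : Fin n, ∏ _j : Fin n, (1 / 4 : ℝ)) ≤
      ∏ i, ∏ j, (1 - 2 * x i * Real.cos (t j) + x i ^ 2) := by
    refine Finset.prod_le_prod (fun i _ => Finset.prod_nonneg fun j _ => by norm_num)
      (fun i _ => Finset.prod_le_prod (fun _ _ => by norm_num)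
        (fun j _ => q_quarter (hx i) (hc j)))
  have hq4pos : (0:ℝ) < ∏ _i : Fin n, ∏ _j : Fin n, (1 / 4 : ℝ) :=
    Finset.prod_pos fun _ _ => Finset.prod_pos fun _ _ => by norm_num
  have hdpos : 0 < ∏ i, ∏ j, (1 - 2 * x i * Real.cos (t j) + x i ^ 2) :=
    lt_of_lt_of_le hq4pos hden_ge
  have hA : |∏ i, (1 / Real.pi) * (1 - x i ^ 2)| ≤ 1 := by
    rw [Finset.abs_prod]
    refine Finset.prod_le_one (fun i _ => abs_nonneg _) (fun i _ => ?_)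
    have h1 := abs_le.mp (hx i)
    have h2 := Real.pi_gt_three
    rw [abs_mul]
    have h3 : |1 / Real.pi| ≤ 1 := by
      rw [abs_of_pos (by positivity : (0:ℝ) < 1 / Real.pi)]
      rw [div_le_one (by linarith)]
      linarith
    have h4 : |1 - x i ^ 2| ≤ 1 := by
      rw [abs_le]
      constructor <;> nlinarith [_root_.sq_abs (x i), abs_nonneg (x i)]
    calc |1 / Real.pi| * |1 - x i ^ 2| ≤ 1 * 1 := by
          exact mul_le_mul h3 h4 (abs_nonneg _) (by norm_num)
      _ = 1 := by norm_num
  have hB : |∏ i, ∏ j ∈ Finset.Ioi i,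
      ((1 - x i * x j) * (2 * (Real.cos (t i) - Real.cos (t j))))| ≤
      ∏ i : Fin n, ∏ _j ∈ Finset.Ioi i, (8 : ℝ) := by
    rw [Finset.abs_prod]
    refine Finset.prod_le_prod (fun _ _ => abs_nonneg _) (fun i _ => ?_)
    rw [Finset.abs_prod]
    refine Finset.prod_le_prod (fun _ _ => abs_nonneg _) (fun j _ => ?_)
    rw [abs_mul]
    have h1 : |1 - x i * x j| ≤ 2 := by
      have := abs_le.mp (hx i); have := abs_le.mp (hx j)
      have hm : |x i * x j| ≤ 1 := by
        rw [abs_mul]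
        nlinarith [abs_nonneg (x i), abs_nonneg (x j), hx i, hx j]
      have := abs_le.mp hm
      rw [abs_le]; constructor <;> linarith
    have h2 : |2 * (Real.cos (t i) - Real.cos (t j))| ≤ 4 := by
      rw [abs_mul, abs_of_pos (by norm_num : (0:ℝ) < 2)]
      have := abs_le.mp (hc i); have := abs_le.mp (hc j)
      have : |Real.cos (t i) - Real.cos (t j)| ≤ 2 := by
        rw [abs_le]; constructor <;> linarith
      linarith
    calc |1 - x i * x j| * |2 * (Real.cos (t i) - Real.cos (t j))| ≤ 2 * 4 :=
          mul_le_mul h1 h2 (abs_nonneg _) (by norm_num)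
      _ = 8 := by norm_num
  rw [Real.norm_eq_abs, Kf, abs_div, abs_of_pos hdpos]
  refine div_le_div₀ (Finset.prod_nonneg fun _ _ => Finset.prod_nonneg fun _ _ => by norm_num)
    ?_ hq4pos hden_ge
  rw [abs_mul]
  calc |∏ i, (1 / Real.pi) * (1 - x i ^ 2)| * |∏ i, ∏ j ∈ Finset.Ioi i,
      ((1 - x i * x j) * (2 * (Real.cos (t i) - Real.cos (t j))))| ≤
      1 * (∏ i : Fin n, ∏ _j ∈ Finset.Ioi i, (8 : ℝ)) := by
        refine mul_le_mul hA hB (abs_nonneg _) (by norm_num)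
    _ = ∏ i : Fin n, ∏ _j ∈ Finset.Ioi i, (8 : ℝ) := one_mul _

private lemma contK_den (n : ℕ) (t : Fin n → ℝ) :
    Continuous fun x : Fin n → ℝ => ∏ i, ∏ j, (1 - 2 * x i * Real.cos (t j) + x i ^ 2) := by
  refine continuous_finset_prod _ fun i _ => continuous_finset_prod _ fun j _ => ?_
  exact (continuous_const.sub ((continuous_const.mul (continuous_apply i)).mul
    continuous_const)).add ((continuous_apply i).pow 2)

private lemma contK_num (n : ℕ) (t : Fin n → ℝ) :
    Continuous fun x : Fin n → ℝ => (∏ i, (1 / Real.pi) * (1 - x i ^ 2)) *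
      ∏ i, ∏ j ∈ Finset.Ioi i, ((1 - x i * x j) * (2 * (Real.cos (t i) - Real.cos (t j)))) := by
  refine Continuous.mul ?_ ?_
  · exact continuous_finset_prod _ fun i _ =>
      continuous_const.mul (continuous_const.sub ((continuous_apply i).pow 2))
  · refine continuous_finset_prod _ fun i _ => continuous_finset_prod _ fun j _ => ?_
    exact (continuous_const.sub ((continuous_apply i).mul (continuous_apply j))).mul
      continuous_const

private lemma contK_x (n : ℕ) (t : Fin n → ℝ) :
    ContinuousAt (fun x : Fin n → ℝ => Kf n x t) (fun _ => 0) := by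
  refine ((contK_num n t).continuousAt).div ((contK_den n t).continuousAt) ?_
  simp

private lemma contK_t (n : ℕ) (x : Fin n → ℝ) (hx : ∀ i, |x i| < 1) :
    Continuous fun t : Fin n → ℝ => Kf n x t := by
  refine Continuous.div ?_ ?_ ?_
  · refine Continuous.mul continuous_const ?_
    refine continuous_finset_prod _ fun i _ => continuous_finset_prod _ fun j _ => ?_
    exact continuous_const.mul (continuous_const.mul
      ((Real.continuous_cos.comp (continuous_apply i)).sub
        (Real.continuous_cos.comp (continuous_apply j))))
  · refine continuous_finset_prod _ fun i _ => continuous_finset_prod _ fun j _ => ?_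
    exact (continuous_const.sub ((continuous_const.mul continuous_const).mul
      (Real.continuous_cos.comp (continuous_apply j)))).add continuous_const
  · intro t
    exact (Finset.prod_pos fun i _ => Finset.prod_pos fun j _ =>
      q_pos (hx i) (Real.abs_cos_le_one _)).ne'

private lemma contP (n : ℕ) : Continuous (Pf n) := by
  refine continuous_finset_prod _ fun i _ => continuous_finset_prod _ fun j _ => ?_
  exact continuous_const.mul ((Real.continuous_cos.comp (continuous_apply i)).sub
    (Real.continuous_cos.comp (continuous_apply j)))

private lemma Pf_bound (n : ℕ) (t : Fin n → ℝ) :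
    ‖Pf n t‖ ≤ ∏ i : Fin n, ∏ _j ∈ Finset.Ioi i, (4 : ℝ) := by
  rw [Real.norm_eq_abs, Pf, Finset.abs_prod]
  refine Finset.prod_le_prod (fun _ _ => abs_nonneg _) (fun i _ => ?_)
  rw [Finset.abs_prod]
  refine Finset.prod_le_prod (fun _ _ => abs_nonneg _) (fun j _ => ?_)
  rw [abs_mul, abs_of_pos (by norm_num : (0:ℝ) < 2)]
  have h1 := abs_le.mp (Real.abs_cos_le_one (t i))
  have h2 := abs_le.mp (Real.abs_cos_le_one (t j))
  have : |Real.cos (t i) - Real.cos (t j)| ≤ 2 := by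
    rw [abs_le]; constructor <;> linarith
  linarith

private lemma pair_id {a b : ℝ} (ha : 0 ≤ a) (hab : a < b) (hb : b ≤ Real.pi) :
    2 * (Real.cos a - Real.cos b) =
      ‖Complex.exp (Complex.I * a) - Complex.exp (Complex.I * b)‖ *
        ‖Complex.exp (Complex.I * a) - Complex.exp (-Complex.I * b)‖ := by
  have e1 : ∀ r : ℝ, Complex.exp (Complex.I * r) =
      ((Real.cos r : ℂ)) + ((Real.sin r : ℂ)) * Complex.I := by
    intro r
    rw [mul_comm, Complex.exp_mul_I, Complex.ofReal_cos, Complex.ofReal_sin]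
  have e2 : Complex.exp (-Complex.I * b) =
      ((Real.cos b : ℂ)) - ((Real.sin b : ℂ)) * Complex.I := by
    have : -Complex.I * (b : ℂ) = ((-b : ℝ) : ℂ) * Complex.I := by push_cast; ring
    rw [this, Complex.exp_mul_I, ← Complex.ofReal_cos, ← Complex.ofReal_sin, Real.cos_neg,
      Real.sin_neg]
    push_cast
    ring
  have h1 : (‖Complex.exp (Complex.I * a) - Complex.exp (Complex.I * b)‖) ^ 2 =
      (Real.cos a - Real.cos b) ^ 2 + (Real.sin a - Real.sin b) ^ 2 := by
    rw [e1 a, e1 b, show ((Real.cos a : ℂ)) + ((Real.sin a : ℂ)) * Complex.I -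
        (((Real.cos b : ℂ)) + ((Real.sin b : ℂ)) * Complex.I) =
        ((Real.cos a - Real.cos b : ℝ) : ℂ) + ((Real.sin a - Real.sin b : ℝ) : ℂ) * Complex.I by
      push_cast; ring]
    rw [Complex.sq_norm, Complex.normSq_add_mul_I]
  have h2 : (‖Complex.exp (Complex.I * a) - Complex.exp (-Complex.I * b)‖) ^ 2 =
      (Real.cos a - Real.cos b) ^ 2 + (Real.sin a + Real.sin b) ^ 2 := by
    rw [e1 a, e2, show ((Real.cos a : ℂ)) + ((Real.sin a : ℂ)) * Complex.I -
        (((Real.cos b : ℂ)) - ((Real.sin b : ℂ)) * Complex.I) =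
        ((Real.cos a - Real.cos b : ℝ) : ℂ) + ((Real.sin a + Real.sin b : ℝ) : ℂ) * Complex.I by
      push_cast; ring]
    rw [Complex.sq_norm, Complex.normSq_add_mul_I]
  have hpos : 0 < 2 * (Real.cos a - Real.cos b) := by
    have := Real.cos_lt_cos_of_nonneg_of_le_pi ha hb hab
    linarith
  have hsq : (‖Complex.exp (Complex.I * a) - Complex.exp (Complex.I * b)‖ *
      ‖Complex.exp (Complex.I * a) - Complex.exp (-Complex.I * b)‖) ^ 2 =
      (2 * (Real.cos a - Real.cos b)) ^ 2 := by
    rw [mul_pow, h1, h2]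
    nlinarith [Real.sin_sq_add_cos_sq a, Real.sin_sq_add_cos_sq b]
  have habs := (sq_eq_sq_iff_abs_eq_abs _ _).mp hsq
  rw [_root_.abs_of_nonneg (mul_nonneg (norm_nonneg _) (norm_nonneg _)),
    _root_.abs_of_pos hpos] at habs
  exact habs.symm

private lemma theta_open (n : ℕ) :
    IsOpen {θ : Fin n → ℝ | StrictMono θ ∧ ∀ i, θ i ∈ Set.Ioo 0 Real.pi} := by
  have h1 : {θ : Fin n → ℝ | StrictMono θ} =
      ⋂ (p : Fin n × Fin n), ⋂ (_ : p.1 < p.2), {θ : Fin n → ℝ | θ p.1 < θ p.2} := by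
    ext f
    simp only [Set.mem_setOf_eq, Set.mem_iInter]
    exact ⟨fun h p hp => h hp, fun h a b hab => h (a, b) hab⟩
  have h2 : {θ : Fin n → ℝ | ∀ i, θ i ∈ Set.Ioo 0 Real.pi} =
      ⋂ i, (fun θ : Fin n → ℝ => θ i) ⁻¹' (Set.Ioo 0 Real.pi) := by
    ext f; simp
  have h3 : {θ : Fin n → ℝ | StrictMono θ ∧ ∀ i, θ i ∈ Set.Ioo 0 Real.pi} =
      {θ : Fin n → ℝ | StrictMono θ} ∩ {θ : Fin n → ℝ | ∀ i, θ i ∈ Set.Ioo 0 Real.pi} := rfl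
  rw [h3, h1, h2]
  refine IsOpen.inter ?_ ?_
  · exact isOpen_iInter_of_finite fun p => isOpen_iInter_of_finite fun _ =>
      isOpen_lt (continuous_apply p.1) (continuous_apply p.2)
  · exact isOpen_iInter_of_finite fun i => isOpen_Ioo.preimage (continuous_apply i)

theorem stmt_8 (n : ℕ)
    (N : Set (Fin n → ℝ)) (hN : N = {x : Fin n → ℝ | StrictAnti x ∧ ∀ i, x i ∈ Set.Ioo (-1 : ℝ) 1})
    (Θ : Set (Fin n → ℝ)) (hΘ : Θ = {θ : Fin n → ℝ | StrictMono θ ∧ ∀ i, θ i ∈ Set.Ioo 0 Real.pi})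
    (θ : Fin n → ℝ) (hθ : θ ∈ Θ) :
    Tendsto
      (fun x : Fin n → ℝ =>
        Matrix.det (Matrix.of fun i j : Fin n =>
            (1 / Real.pi) * (1 - (x i) ^ 2) / (1 - 2 * x i * Real.cos (θ j) + (x i) ^ 2)) /
          ∫ θ' in Θ, Matrix.det (Matrix.of fun i j : Fin n =>
            (1 / Real.pi) * (1 - (x i) ^ 2) / (1 - 2 * x i * Real.cos (θ' j) + (x i) ^ 2)))
      (nhdsWithin (fun _ => (0 : ℝ)) N)
      (nhds
        ((∏ i, ∏ j ∈ Finset.univ.filter (fun j => i < j),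
            (2 * (Real.cos (θ i) - Real.cos (θ j)))) /
          ∫ θ' in Θ, ∏ i, ∏ j ∈ Finset.univ.filter (fun j => i < j),
            (2 * (Real.cos (θ' i) - Real.cos (θ' j))))) ∧
    (∏ i, ∏ j ∈ Finset.univ.filter (fun j => i < j),
        (2 * (Real.cos (θ i) - Real.cos (θ j)))) =
      ∏ i, ∏ j ∈ Finset.univ.filter (fun j => i < j),
        (‖Complex.exp (Complex.I * θ i) - Complex.exp (Complex.I * θ j)‖ *
          ‖Complex.exp (Complex.I * θ i) - Complex.exp (-Complex.I * θ j)‖) := by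
  have hΘo : IsOpen Θ := hΘ ▸ theta_open n
  have hΘm : MeasurableSet Θ := hΘo.measurableSet
  have hθΘ' : StrictMono θ ∧ ∀ i, θ i ∈ Set.Ioo 0 Real.pi := by rw [hΘ] at hθ; exact hθ
  have hΘsub : Θ ⊆ Set.pi Set.univ (fun _ : Fin n => Set.Ioo 0 Real.pi) := by
    rw [hΘ]; intro t ht i _; exact ht.2 i
  have hΘfin : volume Θ < ⊤ := by
    refine lt_of_le_of_lt (measure_mono hΘsub) ?_
    rw [volume_pi_pi]
    exact ENNReal.prod_lt_top fun i _ => by simp [Real.volume_Ioo]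
  haveI : IsFiniteMeasure (volume.restrict Θ) := ⟨by rwa [Measure.restrict_apply_univ]⟩
  have hΘpos : 0 < volume Θ := hΘo.measure_pos volume ⟨θ, hθ⟩
  have hPpos : ∀ t ∈ Θ, 0 < Pf n t := by
    intro t ht
    rw [hΘ] at ht
    refine Finset.prod_pos fun i _ => Finset.prod_pos fun j hj => ?_
    have hij : i < j := Finset.mem_Ioi.mp hj
    have := Real.cos_lt_cos_of_nonneg_of_le_pi (ht.2 i).1.le (ht.2 j).2.le (ht.1 hij)
    linarith
  have hPint : IntegrableOn (Pf n) Θ := by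
    refine Integrable.mono' (integrable_const (∏ i : Fin n, ∏ _j ∈ Finset.Ioi i, (4:ℝ)))
      ((contP n).aestronglyMeasurable) ?_
    exact Filter.Eventually.of_forall fun t => Pf_bound n t
  have hIP : 0 < ∫ t in Θ, Pf n t := by
    rw [setIntegral_pos_iff_support_of_nonneg_ae ?_ hPint]
    · refine lt_of_lt_of_le hΘpos (measure_mono fun t ht => ⟨(hPpos t ht).ne', ht⟩)
    · exact ae_restrict_of_forall_mem hΘm fun t ht => (hPpos t ht).le
  set x₀ : Fin n → ℝ := fun _ => (0:ℝ) with hx₀def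
  have hnum : Tendsto (fun x : Fin n → ℝ => Kf n x θ) (nhdsWithin x₀ N) (nhds (Kf n x₀ θ)) :=
    ((contK_x n θ).tendsto).mono_left nhdsWithin_le_nhds
  have hsmall : ∀ᶠ x : Fin n → ℝ in nhdsWithin x₀ N, ∀ i, |x i| ≤ 1/2 := by
    apply Filter.Eventually.filter_mono nhdsWithin_le_nhds
    refine Filter.eventually_all.mpr fun i => ?_
    have hcont : Tendsto (fun x : Fin n → ℝ => x i) (nhds x₀) (nhds 0) := by
      simpa using (continuous_apply i).tendsto x₀
    have hball : ∀ᶠ y in nhds (0:ℝ), |y| ≤ 1/2 := by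
      filter_upwards [Metric.ball_mem_nhds (0:ℝ) (by norm_num : (0:ℝ) < 1/2)] with y hy
      rw [Metric.mem_ball, Real.dist_eq, sub_zero] at hy
      exact hy.le
    exact hcont.eventually hball
  have hden : Tendsto (fun x : Fin n → ℝ => ∫ t in Θ, Kf n x t) (nhdsWithin x₀ N)
      (nhds (∫ t in Θ, Kf n x₀ t)) := by
    refine tendsto_integral_filter_of_dominated_convergence
      (fun _ => (∏ i : Fin n, ∏ _j ∈ Finset.Ioi i, (8:ℝ)) / ∏ _i : Fin n, ∏ _j : Fin n, (1/4:ℝ))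
      ?_ ?_ (integrable_const _) ?_
    · filter_upwards [self_mem_nhdsWithin] with x hx
      rw [hN] at hx
      have habs : ∀ i, |x i| < 1 := fun i => abs_lt.mpr ⟨(hx.2 i).1, (hx.2 i).2⟩
      exact (contK_t n x habs).aestronglyMeasurable
    · filter_upwards [hsmall] with x hx
      exact Filter.Eventually.of_forall fun t => Kf_bound n x t hx
    · exact Filter.Eventually.of_forall fun t =>
        ((contK_x n t).tendsto).mono_left nhdsWithin_le_nhds
  have hI0 : ∫ t in Θ, Kf n x₀ t = (1/Real.pi)^n * ∫ t in Θ, Pf n t := by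
    simp_rw [hx₀def, Kf_zero]
    exact integral_const_mul _ _
  have hne : (∫ t in Θ, Kf n x₀ t) ≠ 0 := by
    rw [hI0]; exact mul_ne_zero (pow_ne_zero _ (by positivity)) hIP.ne'
  have hfil : ∀ i : Fin n, Finset.univ.filter (fun j => i < j) = Finset.Ioi i := by
    intro i; ext j; simp
  constructor
  · simp only [hfil]
    have heq : (fun x : Fin n → ℝ => Kf n x θ / ∫ t in Θ, Kf n x t) =ᶠ[nhdsWithin x₀ N]
        (fun x : Fin n → ℝ =>
          Matrix.det (Matrix.of fun i j : Fin n =>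
              (1 / Real.pi) * (1 - (x i) ^ 2) / (1 - 2 * x i * Real.cos (θ j) + (x i) ^ 2)) /
            ∫ θ' in Θ, Matrix.det (Matrix.of fun i j : Fin n =>
              (1 / Real.pi) * (1 - (x i) ^ 2) / (1 - 2 * x i * Real.cos (θ' j) + (x i) ^ 2))) := by
      filter_upwards [self_mem_nhdsWithin] with x hx
      rw [hN] at hx
      obtain ⟨hanti, hmem⟩ := hx
      have habs : ∀ i, |x i| < 1 := fun i => abs_lt.mpr ⟨(hmem i).1, (hmem i).2⟩
      have hq : ∀ (t : Fin n → ℝ) (i j : Fin n),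
          (1 - 2 * x i * Real.cos (t j) + x i ^ 2) ≠ 0 :=
        fun t i j => (q_pos (habs i) (Real.abs_cos_le_one _)).ne'
      have hdet : ∀ t : Fin n → ℝ, Matrix.det (Matrix.of fun i j : Fin n =>
          (1 / Real.pi) * (1 - (x i) ^ 2) / (1 - 2 * x i * Real.cos (t j) + (x i) ^ 2)) =
          (∏ i, ∏ j ∈ Finset.Ioi i, (x i - x j)) * Kf n x t :=
        fun t => detH_eq n x t (hq t)
      have hV : (∏ i, ∏ j ∈ Finset.Ioi i, (x i - x j)) ≠ 0 :=
        Finset.prod_ne_zero_iff.mpr fun i _ => Finset.prod_ne_zero_iff.mpr fun j hj =>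
          sub_ne_zero.mpr (hanti (Finset.mem_Ioi.mp hj)).ne'
      simp only [hdet]
      rw [integral_const_mul, mul_div_mul_left _ _ hV]
    have hval : Kf n x₀ θ / ∫ t in Θ, Kf n x₀ t = Pf n θ / ∫ t in Θ, Pf n t := by
      rw [hI0, hx₀def, Kf_zero, mul_div_mul_left _ _
        (pow_ne_zero n (by positivity : (1/Real.pi : ℝ) ≠ 0))]
    have htend := (hnum.div hden hne).congr' heq
    rw [hval] at htend
    exact htend
  · simp only [hfil]
    refine Finset.prod_congr rfl fun i _ => Finset.prod_congr rfl fun j hj => ?_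
    have hij : i < j := Finset.mem_Ioi.mp hj
    exact pair_id (hθΘ'.2 i).1.le (hθΘ'.1 hij) (hθΘ'.2 j).2.le
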